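/- Let n be a positive integer and let A_j, B_j (1 ≤ j ≤ n) be real 2×2 matrices. Then there exists a rank-one real 2×2 matrix C such that the 2×2×2 tensor (A_j; B_j + C) has rank at most 2 for every j. -/

import Mathlib

open Matrix BigOperators

/-- Cayley hyperdeterminant (up to sign) of a 2×2×2 tensor given by matrix slices A, B. -/
noncomputable def Delta {F : Type*} [Field F] (A B : Matrix (Fin 2) (Fin 2) F) : F :=
  ((A + B).det - (A - B).det) ^ 2 / 4 - 4 * A.det * B.det

/-- Rank of a 2×2×2 tensor, given as a pair of 2×2 matrix slices. -/
noncomputable def trank3 {F : Type*} [Field F] (T : Fin 2 → Matrix (Fin 2) (Fin 2) F) : ℕ :=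
  sInf {r | ∃ u v w : Fin r → Fin 2 → F, ∀ k i j, T k i j = ∑ s, u s k * v s i * w s j}

/-- Rank of a 2×2×2×2 tensor, given as a 2×2 array of 2×2 matrix slices. -/
noncomputable def trank4 {F : Type*} [Field F] (T : Fin 2 → Fin 2 → Matrix (Fin 2) (Fin 2) F) : ℕ :=
  sInf {r | ∃ u v w z : Fin r → Fin 2 → F,
    ∀ k l i j, T k l i j = ∑ s, u s k * v s l * w s i * z s j}

/-- The 2×2 matrix with columns u and v. -/
def col2 {F : Type*} [Field F] (u v : Fin 2 → F) : Matrix (Fin 2) (Fin 2) F :=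
  Matrix.of fun i j => ![u, v] j i

lemma det_add_smul' (X Y : Matrix (Fin 2) (Fin 2) ℝ) (s : ℝ) :
    (X + s • Y).det = X.det + s * (X 0 0 * Y 1 1 + X 1 1 * Y 0 0 - X 0 1 * Y 1 0 - X 1 0 * Y 0 1) + s^2 * Y.det := by
  simp [Matrix.det_fin_two]; ring

lemma exists_vecMulVec' (M : Matrix (Fin 2) (Fin 2) ℝ) (h : M.det = 0) :
    ∃ u v, M = vecMulVec u v := by
  rw [Matrix.det_fin_two] at h
  by_cases h00 : M 0 0 ≠ 0
  · refine ⟨![M 0 0, M 1 0], ![1, M 0 1 / M 0 0], ?_⟩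
    ext i j
    fin_cases i <;> fin_cases j <;> simp [vecMulVec] <;> field_simp <;> linarith
  · push_neg at h00
    by_cases h10 : M 1 0 ≠ 0
    · have h01 : M 0 1 = 0 := by
        rcases mul_eq_zero.mp (by rw [h00] at h; linarith : M 0 1 * M 1 0 = 0) with h' | h'
        · exact h'
        · exact absurd h' h10
      refine ⟨![0, M 1 0], ![1, M 1 1 / M 1 0], ?_⟩
      ext i j
      fin_cases i <;> fin_cases j <;> simp [vecMulVec, h00, h01] <;> field_simp
    · push_neg at h10
      refine ⟨![M 0 1, M 1 1], ![0, 1], ?_⟩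
      ext i j
      fin_cases i <;> fin_cases j <;> simp [vecMulVec, h00, h10]

lemma trank3_le_two_of_span' (a b c d : ℝ) (p1 p2 q1 q2 : Fin 2 → ℝ)
    (X Y : Matrix (Fin 2) (Fin 2) ℝ)
    (hX : X = a • vecMulVec p1 p2 + b • vecMulVec q1 q2)
    (hY : Y = c • vecMulVec p1 p2 + d • vecMulVec q1 q2) :
    trank3 ![X, Y] ≤ 2 := by
  apply Nat.sInf_le
  refine ⟨![![a, c], ![b, d]], ![p1, q1], ![p2, q2], ?_⟩
  intro k i j
  fin_cases k <;>
    simp [hX, hY, vecMulVec, Fin.sum_univ_two, Matrix.add_apply, Matrix.smul_apply] <;> ring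

lemma trank3_le_two_of_disc' (X Y : Matrix (Fin 2) (Fin 2) ℝ)
    (h : 0 < (X 0 0 * Y 1 1 + X 1 1 * Y 0 0 - X 0 1 * Y 1 0 - X 1 0 * Y 0 1)^2
        - 4 * X.det * Y.det) :
    trank3 ![X, Y] ≤ 2 := by
  set b := X 0 0 * Y 1 1 + X 1 1 * Y 0 0 - X 0 1 * Y 1 0 - X 1 0 * Y 0 1 with hb
  by_cases hY : Y.det = 0
  · have hbne : b ≠ 0 := by
      intro h0; rw [h0, hY] at h; simp at h
    obtain ⟨q1, q2, hq⟩ := exists_vecMulVec' Y hY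
    set t0 := -X.det / b with ht0
    have hS : (X + t0 • Y).det = 0 := by
      rw [det_add_smul', ← hb, hY, ht0]; field_simp; ring
    obtain ⟨p1, p2, hp⟩ := exists_vecMulVec' _ hS
    apply trank3_le_two_of_span' 1 (-t0) 0 1 p1 p2 q1 q2
    · rw [← hp, ← hq]; module
    · rw [← hq]; module
  · set s := Real.sqrt (b^2 - 4*X.det*Y.det) with hsd
    have hs2 : s^2 = b^2 - 4*X.det*Y.det := Real.sq_sqrt h.le
    have hspos : 0 < s := Real.sqrt_pos.mpr h
    set t1 := (-b + s)/(2*Y.det) with ht1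
    set t2 := (-b - s)/(2*Y.det) with ht2
    have h12 : t1 - t2 ≠ 0 := by
      rw [ht1, ht2]
      have : (-b + s)/(2*Y.det) - (-b - s)/(2*Y.det) = s / Y.det := by field_simp; ring
      rw [this]
      exact div_ne_zero hspos.ne' hY
    have hS1 : (X + t1 • Y).det = 0 := by
      rw [det_add_smul', ← hb, ht1]; field_simp; nlinarith [hs2]
    have hS2 : (X + t2 • Y).det = 0 := by
      rw [det_add_smul', ← hb, ht2]; field_simp; nlinarith [hs2]
    obtain ⟨p1, p2, hp⟩ := exists_vecMulVec' _ hS1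
    obtain ⟨q1, q2, hq⟩ := exists_vecMulVec' _ hS2
    apply trank3_le_two_of_span' (-t2/(t1-t2)) (t1/(t1-t2)) (1/(t1-t2)) (-1/(t1-t2)) p1 p2 q1 q2
    · rw [← hp, ← hq]; ext i j
      simp only [Matrix.add_apply, Matrix.smul_apply, smul_eq_mul]
      field_simp
      ring
    · rw [← hp, ← hq]; ext i j
      simp only [Matrix.add_apply, Matrix.smul_apply, smul_eq_mul]
      field_simp
      ring

lemma rank_eq_one_vecMulVec' (x y : Fin 2 → ℝ) (hx : x ≠ 0) (hy0 : y 0 = 1) :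
    (vecMulVec x y).rank = 1 := by
  have key : ∀ w, vecMulVec x y *ᵥ w = (y ⬝ᵥ w) • x := by
    intro w; ext i
    simp [mulVec, vecMulVec, dotProduct, Fin.sum_univ_two]
    ring
  have hr : LinearMap.range (vecMulVec x y).mulVecLin = Submodule.span ℝ {x} := by
    apply le_antisymm
    · rintro _ ⟨w, rfl⟩
      rw [Matrix.mulVecLin_apply, key]
      exact Submodule.smul_mem _ _ (Submodule.mem_span_singleton_self x)
    · rw [Submodule.span_le, Set.singleton_subset_iff]
      refine ⟨![1, 0], ?_⟩
      rw [Matrix.mulVecLin_apply, key]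
      simp [dotProduct, Fin.sum_univ_two, hy0]
  rw [Matrix.rank, hr, finrank_span_singleton hx]

lemma disc_pos' (b c d e f N : ℝ) (hb : b ≠ 0) (hN1 : 1 ≤ N)
    (hN : (|2*b*c - 4*d*f| + |c^2 - 4*d*e| + 1) / b^2 ≤ N) :
    0 < (c + N*b)^2 - 4*d*(e + N*f) := by
  have hb2 : 0 < b^2 := by positivity
  rw [div_le_iff₀ hb2] at hN
  nlinarith [le_abs_self (2*b*c-4*d*f), neg_abs_le (2*b*c-4*d*f),
    le_abs_self (c^2-4*d*e), neg_abs_le (c^2-4*d*e),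
    abs_nonneg (c^2-4*d*e), abs_nonneg (2*b*c-4*d*f)]

theorem stmt18 (n : ℕ) (hn : 0 < n) (A B : Fin n → Matrix (Fin 2) (Fin 2) ℝ) :
    ∃ C : Matrix (Fin 2) (Fin 2) ℝ, C.rank = 1 ∧
      ∀ j : Fin n, trank3 ![A j, B j + C] ≤ 2 := by
  classical
  -- the polynomial whose value at t is the "mixed determinant" of A j with vecMulVec ![1,t] ![1,t²]
  set p : Fin n → Polynomial ℝ := fun j =>
    Polynomial.C (A j 1 1) + Polynomial.C (-(A j 0 1)) * Polynomial.X
      + Polynomial.C (-(A j 1 0)) * Polynomial.X ^ 2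
      + Polynomial.C (A j 0 0) * Polynomial.X ^ 3 with hp
  have hpne : ∀ j, A j ≠ 0 → p j ≠ 0 := by
    intro j hA hp0
    apply hA
    have h0 : (p j).coeff 0 = A j 1 1 := by
      simp [hp, Polynomial.coeff_add, Polynomial.coeff_C_mul, Polynomial.coeff_X_pow,
        Polynomial.coeff_C]
    have h1 : (p j).coeff 1 = -(A j 0 1) := by
      simp [hp, Polynomial.coeff_add, Polynomial.coeff_C_mul, Polynomial.coeff_X_pow,
        Polynomial.coeff_C]
    have h2 : (p j).coeff 2 = -(A j 1 0) := by
      simp [hp, Polynomial.coeff_add, Polynomial.coeff_C_mul, Polynomial.coeff_X_pow,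
        Polynomial.coeff_C]
    have h3 : (p j).coeff 3 = A j 0 0 := by
      simp [hp, Polynomial.coeff_add, Polynomial.coeff_C_mul, Polynomial.coeff_X_pow,
        Polynomial.coeff_C]
    rw [hp0] at h0 h1 h2 h3
    simp at h0 h1 h2 h3
    ext i k
    fin_cases i <;> fin_cases k <;> simp <;> linarith [h0, h1, h2, h3]
  -- choose t avoiding all roots
  have hfin : (⋃ j, if A j = 0 then (∅ : Set ℝ) else {x | (p j).IsRoot x}).Finite := by
    apply Set.finite_iUnion
    intro j
    by_cases h : A j = 0
    · simp [h]
    · simpa [h] using Polynomial.finite_setOf_isRoot (hpne j h)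
  obtain ⟨t, ht⟩ := hfin.infinite_compl.nonempty
  have htj : ∀ j, A j ≠ 0 →
      A j 1 1 - A j 0 1 * t - A j 1 0 * t^2 + A j 0 0 * t^3 ≠ 0 := by
    intro j hA
    have h1 : t ∉ (if A j = 0 then (∅ : Set ℝ) else {x | (p j).IsRoot x}) := by
      intro hmem
      exact ht (Set.mem_iUnion.mpr ⟨j, hmem⟩)
    rw [if_neg hA] at h1
    have : (p j).eval t = A j 1 1 - A j 0 1 * t - A j 1 0 * t^2 + A j 0 0 * t^3 := by
      simp [hp]; ring
    intro h0
    apply h1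
    show (p j).IsRoot t
    rw [Polynomial.IsRoot.def, this]
    exact h0
  -- the various scalar quantities
  set b : Fin n → ℝ := fun j => A j 1 1 - A j 0 1 * t - A j 1 0 * t^2 + A j 0 0 * t^3 with hbdef
  set c : Fin n → ℝ := fun j => A j 0 0 * B j 1 1 + A j 1 1 * B j 0 0
    - A j 0 1 * B j 1 0 - A j 1 0 * B j 0 1 with hcdef
  set d : Fin n → ℝ := fun j => (A j).det with hddef
  set e : Fin n → ℝ := fun j => (B j).det with hedef
  set f : Fin n → ℝ := fun j => B j 1 1 - B j 0 1 * t - B j 1 0 * t^2 + B j 0 0 * t^3 with hfdef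
  set N : ℝ := 1 + ∑ j, |(|2*(b j)*(c j) - 4*(d j)*(f j)| + |(c j)^2 - 4*(d j)*(e j)| + 1) / (b j)^2| with hNdef
  have hN1 : 1 ≤ N := by
    rw [hNdef]
    have : (0:ℝ) ≤ ∑ j, |(|2*(b j)*(c j) - 4*(d j)*(f j)| + |(c j)^2 - 4*(d j)*(e j)| + 1) / (b j)^2| :=
      Finset.sum_nonneg fun j _ => abs_nonneg _
    linarith
  have hNj : ∀ j, (|2*(b j)*(c j) - 4*(d j)*(f j)| + |(c j)^2 - 4*(d j)*(e j)| + 1) / (b j)^2 ≤ N := by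
    intro j
    have h1 : (|2*(b j)*(c j) - 4*(d j)*(f j)| + |(c j)^2 - 4*(d j)*(e j)| + 1) / (b j)^2
        ≤ |(|2*(b j)*(c j) - 4*(d j)*(f j)| + |(c j)^2 - 4*(d j)*(e j)| + 1) / (b j)^2| :=
      le_abs_self _
    have h2 : |(|2*(b j)*(c j) - 4*(d j)*(f j)| + |(c j)^2 - 4*(d j)*(e j)| + 1) / (b j)^2|
        ≤ ∑ i, |(|2*(b i)*(c i) - 4*(d i)*(f i)| + |(c i)^2 - 4*(d i)*(e i)| + 1) / (b i)^2| :=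
      Finset.single_le_sum
        (f := fun i => |(|2*(b i)*(c i) - 4*(d i)*(f i)| + |(c i)^2 - 4*(d i)*(e i)| + 1) / (b i)^2|)
        (fun i _ => abs_nonneg _) (Finset.mem_univ j)
    rw [hNdef]; linarith
  have hNpos : (0:ℝ) < N := by linarith
  -- the rank-one matrix
  refine ⟨vecMulVec ![N, N*t] ![1, t^2], ?_, ?_⟩
  · apply rank_eq_one_vecMulVec'
    · intro h
      have := congrFun h 0
      simp at this
      linarith
    · simp
  · intro j
    set Cm := vecMulVec ![N, N*t] ![1, t^2] with hCm
    have hC00 : Cm 0 0 = N := by simp [hCm, vecMulVec]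
    have hC01 : Cm 0 1 = N * t^2 := by simp [hCm, vecMulVec]
    have hC10 : Cm 1 0 = N * t := by simp [hCm, vecMulVec]
    have hC11 : Cm 1 1 = N * t^3 := by simp [hCm, vecMulVec]; ring
    by_cases hA : A j = 0
    · apply trank3_le_two_of_span' 0 0 1 1 (fun i => (B j + Cm) i 0) ![1, 0]
        (fun i => (B j + Cm) i 1) ![0, 1]
      · rw [hA]; ext i k; simp [vecMulVec]
      · ext i k; fin_cases k <;> simp [vecMulVec]
    · apply trank3_le_two_of_disc'
      have hkey : (A j 0 0 * (B j + Cm) 1 1 + A j 1 1 * (B j + Cm) 0 0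
            - A j 0 1 * (B j + Cm) 1 0 - A j 1 0 * (B j + Cm) 0 1)^2
          - 4 * (A j).det * (B j + Cm).det
          = (c j + N * b j)^2 - 4 * (d j) * (e j + N * (f j)) := by
        simp only [Matrix.add_apply, hC00, hC01, hC10, hC11, Matrix.det_fin_two,
          hbdef, hcdef, hddef, hedef, hfdef]
        ring
      rw [hkey]
      exact disc_pos' _ _ _ _ _ _ (htj j hA) hN1 (hNj j)
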